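/- arXiv:1106.4882 — 2 statements merged into one kernel-verified Lean document; each statement's English description precedes it below -/
import Mathlib

section
/- Let n ≥ 1 and let u₁, …, uₙ be real numbers. In the field K = HahnSeries ℝ ℂ of Hahn series with real exponents and complex coefficients, write T^λ for the Hahn series with single term 1·T^λ (HahnSeries.single λ 1), and for nonzero f ∈ K let ord(f) denote the least element of its support. Consider the system of equations T^{uᵢ}·yᵢ = T^{1−(u₁+⋯+uₙ)}·(y₁⋯yₙ)⁻¹ (i = 1, …, n) in unknowns y₁, …, yₙ ∈ K with each yᵢ ≠ 0 and ord(yᵢ) = 0. Then: (a) the system has a solution if and only if uᵢ = 1/(n+1) for every i; (b) when uᵢ = 1/(n+1) for all i, the solutions are exactly y₁ = ⋯ = yₙ = ζ·1 where ζ ∈ ℂ satisfies ζ^{n+1} = 1. -/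
/-- The monomial `T^λ` (with coefficient `1`) in the Hahn series field
`K = HahnSeries ℝ ℂ`. -/
noncomputable def Tpow (lam : ℝ) : HahnSeries ℝ ℂ := HahnSeries.single lam (1 : ℂ)

lemma Tpow_ne_zero (lam : ℝ) : Tpow lam ≠ 0 :=
  HahnSeries.single_ne_zero one_ne_zero

lemma Tpow_order (lam : ℝ) : (Tpow lam).order = lam :=
  HahnSeries.order_single one_ne_zero

/-- Order of a finite product of nonzero Hahn series. -/
lemma order_prod_eq {ι : Type*} (s : Finset ι) (y : ι → HahnSeries ℝ ℂ) :
    (∀ i ∈ s, y i ≠ 0) → (∏ i ∈ s, y i).order = ∑ i ∈ s, (y i).order := by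
  classical
  induction s using Finset.induction_on with
  | empty => intro _; simp [HahnSeries.order_one]
  | insert _ _ hnm ih =>
    intro h
    rw [Finset.prod_insert hnm, Finset.sum_insert hnm,
      HahnSeries.order_mul (h _ (Finset.mem_insert_self _ _))
        (Finset.prod_ne_zero_iff.2 fun i hi => h _ (Finset.mem_insert_of_mem hi)),
      ih fun i hi => h _ (Finset.mem_insert_of_mem hi)]

/-- A root of unity in `HahnSeries ℝ ℂ` is a complex constant. -/
lemma hahn_root_of_unity {m : ℕ} (hm : 0 < m) {z : HahnSeries ℝ ℂ}
    (hz : z ^ m = 1) : ∃ ζ : ℂ, ζ ^ m = 1 ∧ z = HahnSeries.C ζ := by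
  classical
  set f : ℂ →+* HahnSeries ℝ ℂ := HahnSeries.C with hf
  set p : Polynomial ℂ := Polynomial.X ^ m - 1 with hpdef
  have hp : p ≠ 0 := by
    have := Polynomial.X_pow_sub_C_ne_zero (R := ℂ) hm 1
    simpa [hpdef] using this
  have hsplit : p.Splits := IsAlgClosed.splits p
  have hmap : p.map f = Polynomial.X ^ m - 1 := by
    simp [hpdef, Polynomial.map_sub]
  have hz' : z ∈ (p.map f).roots := by
    rw [Polynomial.mem_roots']
    constructor
    · rw [hmap]
      have := Polynomial.X_pow_sub_C_ne_zero (R := HahnSeries ℝ ℂ) hm 1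
      simpa using this
    · rw [Polynomial.IsRoot, hmap]
      simp [hz]
  rw [hsplit.roots_map f, Multiset.mem_map] at hz'
  obtain ⟨ζ, hζ, hfz⟩ := hz'
  have hroot := (Polynomial.mem_roots'.mp hζ).2
  rw [Polynomial.IsRoot, hpdef] at hroot
  simp only [Polynomial.eval_sub, Polynomial.eval_pow, Polynomial.eval_X,
    Polynomial.eval_one, sub_eq_zero] at hroot
  exact ⟨ζ, hroot, hfz.symm⟩

/-- Critical point equation of the potential function of a Lagrangian torus fiber
in `ℂPⁿ`, after substituting `yᵢ = e^{xᵢ}`.  (a) The system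
`T^{uᵢ}·yᵢ = T^{1−Σu}·(y₁⋯yₙ)⁻¹` (with all `yᵢ ≠ 0` of order `0`) has a solution
iff `uᵢ = 1/(n+1)` for all `i`; (b) in that case the solutions are exactly the
constant tuples `yᵢ = ζ·1` with `ζ^{n+1} = 1` (the Clifford torus case). -/
theorem clifford_torus_critical_points (n : ℕ) (hn : 1 ≤ n) (u : Fin n → ℝ) :
    ((∃ y : Fin n → HahnSeries ℝ ℂ,
        (∀ i, y i ≠ 0 ∧ (y i).order = 0) ∧
        (∀ i, Tpow (u i) * y i = Tpow (1 - ∑ j, u j) * (∏ j, y j)⁻¹)) ↔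
      (∀ i, u i = 1 / ((n : ℝ) + 1))) ∧
    ((∀ i, u i = 1 / ((n : ℝ) + 1)) →
      ∀ y : Fin n → HahnSeries ℝ ℂ,
        ((∀ i, y i ≠ 0 ∧ (y i).order = 0) ∧
          (∀ i, Tpow (u i) * y i = Tpow (1 - ∑ j, u j) * (∏ j, y j)⁻¹)) ↔
        (∃ ζ : ℂ, ζ ^ (n + 1) = 1 ∧ ∀ i, y i = HahnSeries.C ζ)) := by
  classical
  have hn1 : ((n : ℝ) + 1) ≠ 0 := by positivity
  set c : ℝ := 1 / ((n : ℝ) + 1) with hc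
  -- key fact: a solution forces all uᵢ = c
  have keyA : ∀ y : Fin n → HahnSeries ℝ ℂ,
      (∀ i, y i ≠ 0 ∧ (y i).order = 0) →
      (∀ i, Tpow (u i) * y i = Tpow (1 - ∑ j, u j) * (∏ j, y j)⁻¹) →
      ∀ i, u i = c := by
    intro y hord heq
    have hP : (∏ j, y j) ≠ 0 := Finset.prod_ne_zero_iff.2 fun i _ => (hord i).1
    have hPord : (∏ j, y j).order = 0 := by
      rw [order_prod_eq _ _ fun i _ => (hord i).1]
      exact Finset.sum_eq_zero fun i _ => (hord i).2
    have hPinv : (∏ j, y j)⁻¹ ≠ 0 := inv_ne_zero hP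
    have hPinvord : (∏ j, y j)⁻¹.order = 0 := by
      have h1 : (∏ j, y j) * (∏ j, y j)⁻¹ = 1 := mul_inv_cancel₀ hP
      have := congrArg HahnSeries.order h1
      rwa [HahnSeries.order_mul hP hPinv, HahnSeries.order_one, hPord, zero_add] at this
    -- each uᵢ = 1 - Σu
    have hui : ∀ i, u i = 1 - ∑ j, u j := by
      intro i
      have := congrArg HahnSeries.order (heq i)
      rwa [HahnSeries.order_mul (Tpow_ne_zero _) (hord i).1,
        HahnSeries.order_mul (Tpow_ne_zero _) hPinv, Tpow_order, Tpow_order,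
        (hord i).2, hPinvord, add_zero, add_zero] at this
    have hsum : ∑ j, u j = (n : ℝ) * (1 - ∑ j, u j) := by
      calc ∑ j, u j = ∑ _j : Fin n, (1 - ∑ j, u j) := Finset.sum_congr rfl fun j _ => hui j
        _ = (n : ℝ) * (1 - ∑ j, u j) := by
            rw [Finset.sum_const, Finset.card_univ, Fintype.card_fin, nsmul_eq_mul]
    intro i
    rw [hui i, hc]
    have : (1 - ∑ j, u j) * ((n : ℝ) + 1) = 1 := by
      have := hsum
      ring_nf
      ring_nf at this
      linarith
    field_simp
    linarith [this]
  -- key fact: under uᵢ = c, solutions ↔ constant roots of unity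
  have keyB : ∀ y : Fin n → HahnSeries ℝ ℂ, (∀ i, u i = c) →
      (((∀ i, y i ≠ 0 ∧ (y i).order = 0) ∧
        (∀ i, Tpow (u i) * y i = Tpow (1 - ∑ j, u j) * (∏ j, y j)⁻¹)) ↔
      (∃ ζ : ℂ, ζ ^ (n + 1) = 1 ∧ ∀ i, y i = HahnSeries.C ζ)) := by
    intro y hu
    have hsumc : (1 : ℝ) - ∑ j, u j = c := by
      rw [Finset.sum_congr rfl fun j _ => hu j, Finset.sum_const, Finset.card_univ,
        Fintype.card_fin, nsmul_eq_mul, hc]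
      field_simp
      ring
    constructor
    · rintro ⟨hord, heq⟩
      have hP : (∏ j, y j) ≠ 0 := Finset.prod_ne_zero_iff.2 fun i _ => (hord i).1
      have hyi : ∀ i, y i = (∏ j, y j)⁻¹ := by
        intro i
        have h := heq i
        rw [hu i, hsumc] at h
        exact mul_left_cancel₀ (Tpow_ne_zero c) h
      set z : HahnSeries ℝ ℂ := (∏ j, y j)⁻¹ with hz
      have hProd : (∏ j, y j) = z ^ n := by
        rw [Finset.prod_congr rfl fun j _ => hyi j, Finset.prod_const, Finset.card_univ,
          Fintype.card_fin]
      have hzpow : z ^ (n + 1) = 1 := by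
        have : z ^ n * z = 1 := by
          rw [← hProd, hz, mul_inv_cancel₀ hP]
        rw [pow_succ]; exact this
      obtain ⟨ζ, hζ, hzeq⟩ := hahn_root_of_unity (Nat.succ_pos n) hzpow
      exact ⟨ζ, hζ, fun i => by rw [hyi i, hzeq]⟩
    · rintro ⟨ζ, hζ, hy⟩
      have hζ0 : ζ ≠ 0 := by
        intro h; rw [h, zero_pow (Nat.succ_ne_zero n)] at hζ; exact zero_ne_one hζ
      have hCζ : (HahnSeries.C ζ : HahnSeries ℝ ℂ) ≠ 0 := HahnSeries.C_ne_zero hζ0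
      have hProd : (∏ j, y j) = HahnSeries.C (ζ ^ n) := by
        rw [Finset.prod_congr rfl fun j _ => hy j, Finset.prod_const, Finset.card_univ,
          Fintype.card_fin, ← map_pow]
      have hinv : (∏ j, y j)⁻¹ = HahnSeries.C ζ := by
        rw [hProd]
        refine inv_eq_of_mul_eq_one_right ?_
        rw [← map_mul, ← pow_succ, hζ, map_one]
      refine ⟨fun i => ⟨by rw [hy i]; exact hCζ, by rw [hy i]; exact HahnSeries.order_C⟩,
        fun i => ?_⟩
      rw [hy i, hu i, hsumc, hinv]
  constructor
  · constructor
    · rintro ⟨y, hord, heq⟩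
      exact keyA y hord heq
    · intro hu
      refine ⟨fun _ => HahnSeries.C 1, ?_⟩
      exact ((keyB (fun _ => HahnSeries.C 1) hu).mpr ⟨1, one_pow _, fun _ => rfl⟩)
  · intro hu y
    exact keyB y hu
end

section
/- The universal Novikov field Λ is a subfield of HahnSeries ℝ ℚ: for every f ∈ Λ with f ≠ 0 there exists g ∈ Λ with f·g = 1. -/
/-- Membership in the universal Novikov field `Λ`: a Hahn series
`f ∈ HahnSeries ℝ ℚ` belongs to `Λ` iff its support meets every half-line
`(−∞, C]` in a finite set. -/
def IsNovikov (f : HahnSeries ℝ ℚ) : Prop :=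
  ∀ C : ℝ, (f.support ∩ Set.Iic C).Finite

open Set Pointwise


/-- sum of a list with all elements ≥ ε is at least length • ε -/
lemma list_nsmul_le_sum {ε : ℝ} : ∀ l : List ℝ, (∀ y ∈ l, ε ≤ y) → l.length • ε ≤ l.sum := by
  intro l hl
  induction l with
  | nil => simp
  | cons a t ih =>
      simp only [List.length_cons, List.sum_cons, succ_nsmul]
      have := ih (fun y hy => hl y (List.mem_cons_of_mem a hy))
      have ha := hl a (List.mem_cons_self)
      linarith [this]

lemma closure_inter_Iic_finite {S : Set ℝ} (hpos : S ⊆ Set.Ioi 0)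
    (hS : ∀ C : ℝ, (S ∩ Set.Iic C).Finite) (C : ℝ) :
    ((AddSubmonoid.closure S : Set ℝ) ∩ Set.Iic C).Finite := by
  classical
  set F : Set ℝ := S ∩ Set.Iic C with hF
  have hFfin : F.Finite := hS C
  -- every element of closure S ∩ Iic C is the sum of a list with entries in F
  have hrep : ∀ x ∈ (AddSubmonoid.closure S : Set ℝ) ∩ Set.Iic C,
      ∃ l : List ℝ, (∀ y ∈ l, y ∈ F) ∧ l.sum = x := by
    rintro x ⟨hx, hxC⟩
    obtain ⟨l, hl, hsum⟩ := AddSubmonoid.exists_list_of_mem_closure hx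
    refine ⟨l, fun y hy => ?_, hsum⟩
    have hyS := hl y hy
    have hnn : ∀ z ∈ l, (0:ℝ) ≤ z := fun z hz => le_of_lt (hpos (hl z hz))
    have := List.single_le_sum hnn y hy
    exact ⟨hyS, le_trans this (hsum ▸ hxC)⟩
  by_cases hFe : F = ∅
  · refine (Set.finite_singleton (0:ℝ)).subset ?_
    intro x hx
    obtain ⟨l, hl, hsum⟩ := hrep x hx
    have : l = [] := by
      cases l with
      | nil => rfl
      | cons a t => exact absurd (hl a (List.mem_cons_self)) (by simp [hFe])
    simp [this] at hsum
    simp [← hsum]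
  · -- F nonempty: has a positive minimum ε
    have hFne : F.Nonempty := Set.nonempty_iff_ne_empty.2 hFe
    obtain ⟨ε, hεF, hεmin⟩ := (by obtain ⟨a, ha, h⟩ := Set.exists_min_image F id hFfin hFne; exact ⟨a, ha, fun y hy hle => le_antisymm (h y hy) hle⟩ : ∃ ε ∈ F, ∀ y ∈ F, id y ≤ id ε → id ε = id y)
    have hεpos : 0 < ε := hpos hεF.1
    set N : ℕ := ⌈C / ε⌉₊ with hN
    -- iterated sumsets
    let A : ℕ → Set ℝ := fun n => Nat.rec ({0} : Set ℝ) (fun _ An => An ∪ (An + F)) n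
    have hAfin : ∀ n, (A n).Finite := by
      intro n
      induction n with
      | zero => exact Set.finite_singleton 0
      | succ n ih => exact ih.union (ih.add hFfin)
    have hAmem : ∀ n (l : List ℝ), (∀ y ∈ l, y ∈ F) → l.length ≤ n → l.sum ∈ A n := by
      intro n
      induction n with
      | zero =>
          intro l _ hlen
          have : l = [] := List.length_eq_zero_iff.mp (Nat.le_zero.mp hlen)
          simp [this, A]
      | succ n ih =>
          intro l hl hlen
          cases l with
          | nil =>
              have : (0:ℝ) ∈ A n := by
                simpa using ih [] (by simp) (by simp)
              exact Or.inl this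
          | cons a t =>
              have ht : t.sum ∈ A n := ih t (fun y hy => hl y (List.mem_cons_of_mem a hy))
                (by simpa using Nat.succ_le_succ_iff.mp (by simpa using hlen))
              refine Or.inr ?_
              exact ⟨t.sum, ht, a, hl a (List.mem_cons_self), by simp [add_comm]⟩
    refine (hAfin N).subset ?_
    intro x hx
    obtain ⟨l, hl, hsum⟩ := hrep x hx
    have hxC : x ≤ C := hx.2
    have hεle : ∀ y ∈ l, ε ≤ y := by
      intro y hy
      have hyF := hl y hy
      by_contra h
      push_neg at h
      exact h.ne (hεmin y hyF h.le).symm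
    have hlen : l.length • ε ≤ C := le_trans (list_nsmul_le_sum l hεle) (hsum ▸ hxC)
    have hlenN : l.length ≤ N := by
      have h1 : (l.length : ℝ) ≤ C / ε := by
        rw [le_div_iff₀ hεpos]
        simpa [nsmul_eq_mul, mul_comm] using hlen
      calc l.length = ⌈(l.length : ℝ)⌉₊ := by simp
        _ ≤ N := Nat.ceil_le_ceil h1
    exact hsum ▸ hAmem N l hl hlenN

lemma support_pow_subset_closure (u : HahnSeries ℝ ℚ) (n : ℕ) :
    (u ^ n).support ⊆ (AddSubmonoid.closure u.support : Set ℝ) := by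
  induction n with
  | zero =>
      intro x hx
      rw [pow_zero, HahnSeries.support_one, Set.mem_singleton_iff] at hx
      rw [hx]
      exact (AddSubmonoid.closure u.support).zero_mem
  | succ n ih =>
      intro x hx
      rw [pow_succ] at hx
      obtain ⟨i, hi, j, hj, rfl⟩ := HahnSeries.support_mul_subset hx
      exact (AddSubmonoid.closure u.support).add_mem (ih hi)
        (AddSubmonoid.subset_closure hj)

/-- The universal Novikov field `Λ` is a subfield of the field
`HahnSeries ℝ ℚ`: every nonzero `f ∈ Λ` has a multiplicative inverse lying
in `Λ`. -/
theorem novikov_isSubfield :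
    ∀ f : HahnSeries ℝ ℚ, IsNovikov f → f ≠ 0 →
      ∃ g : HahnSeries ℝ ℚ, IsNovikov g ∧ f * g = 1 := by
  intro f hf hf0
  have hc : f.leadingCoeff ≠ 0 := HahnSeries.leadingCoeff_ne_zero.mpr hf0
  set v : ℝ := f.order with hv
  set u : HahnSeries ℝ ℚ :=
    1 - HahnSeries.single (-v) (f.leadingCoeff)⁻¹ * f with hu_def
  have hu : 0 < u.orderTop := HahnSeries.unit_aux f (inv_mul_cancel₀ hc) (-v) (neg_add_cancel v)
  set s := HahnSeries.SummableFamily.powers u with hs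
  refine ⟨HahnSeries.single (-v) (f.leadingCoeff)⁻¹ * s.hsum, ?_, ?_⟩
  · -- IsNovikov of the inverse
    -- support u ⊆ Ioi 0
    have hupos : u.support ⊆ Set.Ioi (0:ℝ) := by
      intro x hx
      have h1 : u.orderTop ≤ (x : WithTop ℝ) :=
        HahnSeries.orderTop_le_of_coeff_ne_zero hx
      have : (0 : WithTop ℝ) < (x : WithTop ℝ) := lt_of_lt_of_le hu h1
      exact_mod_cast this
    -- u is Novikov
    have huN : IsNovikov u := by
      intro C
      refine (((hf (C + v)).image (fun x => -v + x)).insert 0).subset ?_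
      rintro x ⟨hx, hxC⟩
      have : x ∈ (1 : HahnSeries ℝ ℚ).support ∪
          (HahnSeries.single (-v) (f.leadingCoeff)⁻¹ * f).support := by
        by_contra h
        simp only [Set.mem_union, not_or, HahnSeries.mem_support, not_not] at h
        apply hx
        simp only [hu_def, HahnSeries.coeff_sub, Pi.sub_apply, h.1, h.2, sub_zero]
      rcases this with h1 | h2
      · rw [HahnSeries.support_one] at h1
        exact Set.mem_insert_iff.2 (Or.inl h1)
      · obtain ⟨i, hi, j, hj, rfl⟩ := HahnSeries.support_mul_subset h2
        have hiv : i = -v := HahnSeries.support_single_subset hi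
        refine Set.mem_insert_iff.2 (Or.inr ⟨j, ⟨hj, ?_⟩, by rw [hiv]⟩)
        have h3 : -v + j ≤ C := by rw [← hiv]; exact hxC
        exact Set.mem_Iic.mpr (by linarith)
    -- closure of support u is "Novikov"
    have hclos := fun C => closure_inter_Iic_finite hupos huN C
    intro C
    refine ((hclos (C + v)).image (fun x => -v + x)).subset ?_
    rintro x ⟨hx, hxC⟩
    obtain ⟨i, hi, j, hj, rfl⟩ :=
      HahnSeries.support_mul_subset
        (x := HahnSeries.single (-v) (f.leadingCoeff)⁻¹) hx
    have hiv : i = -v := HahnSeries.support_single_subset hi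
    have hj' : j ∈ (AddSubmonoid.closure u.support : Set ℝ) := by
      obtain ⟨n, hn⟩ := Set.mem_iUnion.mp
        (HahnSeries.SummableFamily.support_hsum_subset hj)
      exact support_pow_subset_closure u n (by simpa [hs, hu] using hn)
    refine ⟨j, ⟨hj', ?_⟩, by rw [hiv]⟩
    have h3 : -v + j ≤ C := by rw [← hiv]; exact hxC
    exact Set.mem_Iic.mpr (by linarith)
  · -- multiplicative inverse
    have h := HahnSeries.SummableFamily.one_sub_self_mul_hsum_powers hu
    have h2 : f * ((HahnSeries.single (-v)) f.leadingCoeff⁻¹ * s.hsum)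
        = (1 - u) * s.hsum := by rw [hu_def]; ring
    rw [h2]
    exact h
end
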